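/- Let σ > 0, κ ≥ 0, and let z, w ∈ ℂ have nonpositive real parts. Then the complex Riccati differential equation ψ'(t) = (σ²/2)ψ(t)² − κψ(t) + w with initial condition ψ(0) = z has a unique solution ψ defined on the whole half-line [0,∞) (i.e., the maximal solution does not explode in finite time), and this solution satisfies Re ψ(t) ≤ 0 for all t ≥ 0. -/

import Mathlib

open Set Filter Real Metric
open scoped Topology

private lemma slope_eventually_lt {f : ℝ → ℝ} {f' t r : ℝ}
    (hf : HasDerivWithinAt f f' (Ici t) t) (h : f' < r) :
    ∀ᶠ z in 𝓝[>] t, (z - t)⁻¹ * (f z - f t) < r := by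
  have h1 : Tendsto (slope f t) (𝓝[>] t) (𝓝 f') :=
    (hasDerivWithinAt_iff_tendsto_slope.1 hf).mono_left
      (nhdsWithin_mono _ (fun z (hz : t < z) => ⟨Set.mem_Ici.2 (le_of_lt hz), ne_of_gt hz⟩))
  filter_upwards [h1.eventually_lt_const h] with z hz
  rwa [slope_def_field, div_eq_inv_mul] at hz

private lemma riccati_sign (a κ : ℝ) (ha : 0 ≤ a) (hκ : 0 ≤ κ) (w : ℂ) (hw : w.re ≤ 0)
    (ψ : ℝ → ℂ) (s : ℝ)
    (hc : ContinuousOn ψ (Icc 0 s))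
    (hd : ∀ t ∈ Ico 0 s, HasDerivWithinAt ψ ((a : ℂ) * ψ t ^ 2 - (κ : ℂ) * ψ t + w) (Ici t) t)
    (h0 : (ψ 0).re ≤ 0) :
    ∀ t ∈ Icc 0 s, (ψ t).re ≤ 0 := by
  rcases le_or_gt s 0 with hs | hs
  · intro t ht
    have : t = 0 := le_antisymm (ht.2.trans hs) ht.1
    rwa [this]
  have hxc : ContinuousOn (fun t => (ψ t).re) (Icc 0 s) :=
    Complex.continuous_re.comp_continuousOn hc
  obtain ⟨R, hR⟩ := isCompact_Icc.exists_bound_of_continuousOn hxc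
  have hR0 : 0 ≤ R := le_trans (norm_nonneg _) (hR 0 ⟨le_refl 0, hs.le⟩)
  set K := a * R with hKdef
  have hK0 : 0 ≤ K := mul_nonneg ha hR0
  have key : ∀ t ∈ Icc 0 s,
      (fun t => max (ψ t).re 0) t ≤ gronwallBound 0 K 0 (t - 0) := by
    refine le_gronwallBound_of_liminf_deriv_right_le
      (f' := fun t => K * max (ψ t).re 0) (fun x hx => (hxc x hx).max continuousWithinAt_const) ?_ ?_ ?_
    · intro t ht r hr
      have hr0 : 0 < r := lt_of_le_of_lt (mul_nonneg hK0 (le_max_right _ _)) hr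
      rcases lt_or_ge (ψ t).re 0 with hxt | hxt
      · have hct : ContinuousWithinAt (fun t => (ψ t).re) (Ici t) t :=
          (Complex.continuous_re.continuousAt.comp_continuousWithinAt
            (hd t ht).continuousWithinAt)
      -- eventually x z < 0 on 𝓝[>] t
        have hev : ∀ᶠ z in 𝓝[>] t, (ψ z).re < 0 :=
          ((hct.mono_left (nhdsWithin_mono _ Ioi_subset_Ici_self)).eventually_lt_const hxt)
        refine (hev.mono fun z hz => ?_).frequently
        rw [max_eq_right hz.le, max_eq_right hxt.le, sub_zero, mul_zero]
        exact hr0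
      · have hdx : HasDerivWithinAt (fun t => (ψ t).re)
            (((a : ℂ) * ψ t ^ 2 - (κ : ℂ) * ψ t + w).re) (Ici t) t :=
          Complex.reCLM.hasFDerivAt.comp_hasDerivWithinAt t (hd t ht)
        have hxR : |(ψ t).re| ≤ R := by
          have := hR t (Ico_subset_Icc_self ht)
          rwa [Real.norm_eq_abs] at this
        have hp : ((a : ℂ) * ψ t ^ 2 - (κ : ℂ) * ψ t + w).re ≤ K * max (ψ t).re 0 := by
          rw [max_eq_left hxt]
          have hexp : ((a : ℂ) * ψ t ^ 2 - (κ : ℂ) * ψ t + w).re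
              = a * ((ψ t).re ^ 2 - (ψ t).im ^ 2) - κ * (ψ t).re + w.re := by
            simp [Complex.add_re, Complex.sub_re, Complex.mul_re, pow_two]
          rw [hexp, hKdef]
          have hxle : (ψ t).re ≤ R := (abs_le.1 hxR).2
          nlinarith [mul_nonneg ha (sq_nonneg (ψ t).im),
            mul_nonneg (mul_nonneg ha hxt) (sub_nonneg.2 hxle),
            mul_nonneg hκ hxt]
        have hfreq := slope_eventually_lt hdx (lt_of_le_of_lt hp hr)
        refine ((hfreq.and self_mem_nhdsWithin).mono fun z hz => ?_).frequently
        obtain ⟨h1, h2⟩ := hz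
        have hzt : 0 < z - t := sub_pos.2 h2
        rw [max_eq_left hxt, ← max_sub_sub_right]
        rcases le_total ((ψ z).re - (ψ t).re) (0 - (ψ t).re) with hm | hm
        · rw [max_eq_right hm]
          have : (z - t)⁻¹ * (0 - (ψ t).re) ≤ 0 := by
            apply mul_nonpos_of_nonneg_of_nonpos (le_of_lt (inv_pos.2 hzt))
            linarith
          exact lt_of_le_of_lt this hr0
        · rw [max_eq_left hm]; exact h1
    · exact le_of_eq (max_eq_right h0)
    · intro t _; rw [add_zero]
  intro t ht
  have := key t ht
  rw [sub_zero, gronwallBound_ε0_δ0] at this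
  exact le_trans (le_max_left _ _) this

private lemma riccati_bound (a κ : ℝ) (ha : 0 ≤ a) (hκ : 0 ≤ κ) (w : ℂ) (hw : w.re ≤ 0)
    (ψ : ℝ → ℂ) (s : ℝ)
    (hc : ContinuousOn ψ (Icc 0 s))
    (hd : ∀ t ∈ Ico 0 s, HasDerivWithinAt ψ ((a : ℂ) * ψ t ^ 2 - (κ : ℂ) * ψ t + w) (Ici t) t)
    (h0 : (ψ 0).re ≤ 0) :
    ∀ t ∈ Icc 0 s,
      Complex.normSq (ψ t) ≤ (Complex.normSq (ψ 0) + Complex.normSq w) * Real.exp s := by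
  have hsign := riccati_sign a κ ha hκ w hw ψ s hc hd h0
  have key : ∀ t ∈ Icc 0 s, Complex.normSq (ψ t)
      ≤ gronwallBound (Complex.normSq (ψ 0)) 1 (Complex.normSq w) (t - 0) := by
    refine le_gronwallBound_of_liminf_deriv_right_le
      (f' := fun t => 2 * ((ψ t).re * ((a : ℂ) * ψ t ^ 2 - (κ : ℂ) * ψ t + w).re
        + (ψ t).im * ((a : ℂ) * ψ t ^ 2 - (κ : ℂ) * ψ t + w).im))
      (Complex.continuous_normSq.comp_continuousOn hc) ?_ le_rfl ?_
    · intro t ht r hr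
      set p := (a : ℂ) * ψ t ^ 2 - (κ : ℂ) * ψ t + w with hp
      have hre : HasDerivWithinAt (fun t => (ψ t).re) p.re (Ici t) t :=
        Complex.reCLM.hasFDerivAt.comp_hasDerivWithinAt t (hd t ht)
      have him : HasDerivWithinAt (fun t => (ψ t).im) p.im (Ici t) t :=
        Complex.imCLM.hasFDerivAt.comp_hasDerivWithinAt t (hd t ht)
      have hsq : HasDerivWithinAt (fun t => Complex.normSq (ψ t))
          (2 * ((ψ t).re * p.re + (ψ t).im * p.im)) (Ici t) t := by
        have h1 := (hre.pow 2).add (him.pow 2)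
        have heq : (fun t => (ψ t).re) ^ 2 + (fun t => (ψ t).im) ^ 2
            = fun t => Complex.normSq (ψ t) := by
          funext u; simp [Complex.normSq_apply, pow_two]
        rw [heq] at h1
        refine h1.congr_deriv ?_
        push_cast
        ring
      exact (slope_eventually_lt hsq hr).frequently
    · intro t ht
      have hx := hsign t (Ico_subset_Icc_self ht)
      simp only [Complex.add_re, Complex.sub_re, Complex.mul_re, Complex.add_im,
        Complex.sub_im, Complex.mul_im, Complex.ofReal_re, Complex.ofReal_im,
        Complex.normSq_apply, pow_two]
      nlinarith [sq_nonneg ((ψ t).re - w.re), sq_nonneg ((ψ t).im - w.im),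
        mul_nonneg hκ (add_nonneg (sq_nonneg (ψ t).re) (sq_nonneg (ψ t).im)),
        mul_nonneg (mul_nonneg ha (add_nonneg (sq_nonneg (ψ t).re) (sq_nonneg (ψ t).im)))
          (neg_nonneg.2 hx), sq_nonneg (ψ t).re, sq_nonneg (ψ t).im]
  intro t ht
  have h2 := key t ht
  rw [sub_zero, gronwallBound_of_K_ne_0 one_ne_zero] at h2
  simp only [one_mul, div_one] at h2
  have he : Real.exp t ≤ Real.exp s := Real.exp_le_exp.2 ht.2
  nlinarith [Complex.normSq_nonneg (ψ 0), Complex.normSq_nonneg w, Real.exp_pos t,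
    Real.exp_pos s]

theorem stmt_5 (σ κ : ℝ) (hσ : 0 < σ) (hκ : 0 ≤ κ) (z w : ℂ)
    (hz : z.re ≤ 0) (hw : w.re ≤ 0) :
    ∃ ψ : ℝ → ℂ, ψ 0 = z ∧
      (∀ t ∈ Set.Ici (0 : ℝ),
        HasDerivWithinAt ψ (((σ ^ 2 / 2 : ℝ) : ℂ) * ψ t ^ 2 - (κ : ℂ) * ψ t + w)
          (Set.Ici 0) t) ∧
      (∀ t ∈ Set.Ici (0 : ℝ), (ψ t).re ≤ 0) ∧
      ∀ φ : ℝ → ℂ, φ 0 = z →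
        (∀ t ∈ Set.Ici (0 : ℝ),
          HasDerivWithinAt φ (((σ ^ 2 / 2 : ℝ) : ℂ) * φ t ^ 2 - (κ : ℂ) * φ t + w)
            (Set.Ici 0) t) →
        Set.EqOn φ ψ (Set.Ici 0) := by
  set a : ℝ := σ ^ 2 / 2 with haa
  have ha0 : 0 < a := by positivity
  -- from a global solution, get local continuity / derivative data
  have hcont : ∀ φ : ℝ → ℂ,
      (∀ t ∈ Set.Ici (0 : ℝ), HasDerivWithinAt φ ((a : ℂ) * φ t ^ 2 - (κ : ℂ) * φ t + w)
        (Set.Ici 0) t) → ∀ s : ℝ, ContinuousOn φ (Icc 0 s) := by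
    intro φ h s t ht
    exact ((h t ht.1).continuousWithinAt).mono (fun u hu => hu.1)
  have hder : ∀ φ : ℝ → ℂ,
      (∀ t ∈ Set.Ici (0 : ℝ), HasDerivWithinAt φ ((a : ℂ) * φ t ^ 2 - (κ : ℂ) * φ t + w)
        (Set.Ici 0) t) → ∀ s : ℝ, ∀ t ∈ Ico 0 s,
        HasDerivWithinAt φ ((a : ℂ) * φ t ^ 2 - (κ : ℂ) * φ t + w) (Ici t) t := by
    intro φ h s t ht
    exact (h t ht.1).mono (Ici_subset_Ici.2 ht.1)
  suffices hex : ∃ ψ : ℝ → ℂ, ψ 0 = z ∧ ∀ t ∈ Set.Ici (0 : ℝ),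
      HasDerivWithinAt ψ ((a : ℂ) * ψ t ^ 2 - (κ : ℂ) * ψ t + w) (Set.Ici 0) t by
    obtain ⟨ψ, hψ0, hψd⟩ := hex
    have hz0 : (ψ 0).re ≤ 0 := by rw [hψ0]; exact hz
    refine ⟨ψ, hψ0, hψd, ?_, ?_⟩
    · intro t ht
      exact riccati_sign a κ ha0.le hκ w hw ψ t (hcont ψ hψd t) (hder ψ hψd t) hz0
        t ⟨ht, le_refl t⟩
    · intro φ hφ0 hφd t ht
      have hzφ : (φ 0).re ≤ 0 := by rw [hφ0]; exact hz
      set B : ℝ := Real.sqrt ((Complex.normSq z + Complex.normSq w) * Real.exp t) with hB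
      have hB0 : 0 ≤ B := Real.sqrt_nonneg _
      have hmem : ∀ χ : ℝ → ℂ, χ 0 = z →
          (∀ u ∈ Set.Ici (0 : ℝ), HasDerivWithinAt χ ((a : ℂ) * χ u ^ 2 - (κ : ℂ) * χ u + w)
            (Set.Ici 0) u) → ∀ u ∈ Icc 0 t, χ u ∈ Metric.closedBall (0 : ℂ) B := by
        intro χ hχ0 hχd u hu
        have := riccati_bound a κ ha0.le hκ w hw χ t (hcont χ hχd t) (hder χ hχd t)
          (by rw [hχ0]; exact hz) u hu
        rw [hχ0] at this
        rw [Metric.mem_closedBall, dist_zero_right]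
        calc ‖χ u‖ = Real.sqrt (Complex.normSq (χ u)) := by
              rw [Complex.norm_def]
          _ ≤ B := Real.sqrt_le_sqrt this
      set L : NNReal := Real.toNNReal (2 * a * B + κ) with hL
      have hlip : LipschitzOnWith L (fun u : ℂ => (a : ℂ) * u ^ 2 - (κ : ℂ) * u + w)
          (Metric.closedBall (0 : ℂ) B) := by
        apply LipschitzOnWith.of_dist_le_mul
        intro u hu v hv
        rw [Metric.mem_closedBall, dist_zero_right] at hu hv
        rw [dist_eq_norm, dist_eq_norm]
        have hfact : ((a : ℂ) * u ^ 2 - (κ : ℂ) * u + w) - ((a : ℂ) * v ^ 2 - (κ : ℂ) * v + w)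
            = ((a : ℂ) * (u + v) - (κ : ℂ)) * (u - v) := by ring
        rw [hfact, norm_mul]
        have h1 : ‖(a : ℂ) * (u + v) - (κ : ℂ)‖ ≤ (L : ℝ) := by
          have h2 : ‖(a : ℂ) * (u + v) - (κ : ℂ)‖ ≤ a * (‖u‖ + ‖v‖) + κ := by
            refine (norm_sub_le _ _).trans ?_
            rw [norm_mul, Complex.norm_real, Complex.norm_real, Real.norm_eq_abs,
              Real.norm_eq_abs, abs_of_nonneg ha0.le, abs_of_nonneg hκ]
            have := norm_add_le u v
            nlinarith
          have h3 : a * (‖u‖ + ‖v‖) + κ ≤ 2 * a * B + κ := by nlinarith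
          have h4 : (L : ℝ) = 2 * a * B + κ := Real.coe_toNNReal _ (by positivity)
          rw [h4]; exact h2.trans h3
        exact mul_le_mul_of_nonneg_right h1 (norm_nonneg _)
      have := ODE_solution_unique_of_mem_Icc_right
        (v := fun _ u => (a : ℂ) * u ^ 2 - (κ : ℂ) * u + w)
        (s := fun _ => Metric.closedBall (0 : ℂ) B) (fun _ _ => hlip)
        (hcont φ hφd t) (hder φ hφd t)
        (fun u hu => hmem φ hφ0 hφd u (Ico_subset_Icc_self hu))
        (hcont ψ hψd t) (hder ψ hψd t)
        (fun u hu => hmem ψ hψ0 hψd u (Ico_subset_Icc_self hu))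
        (by rw [hφ0, hψ0])
      exact this ⟨ht, le_refl t⟩
  -- existence
  obtain ⟨d, hd2⟩ := IsAlgClosed.exists_pow_nat_eq ((κ : ℂ) ^ 2 - 4 * (a : ℂ) * w) zero_lt_two
  have hac : (a : ℂ) ≠ 0 := Complex.ofReal_ne_zero.2 ha0.ne'
  set c : ℂ := ((κ : ℂ) - d) / (2 * a) with hcc
  have hcmul : (2 * (a : ℂ)) * c = (κ : ℂ) - d := by
    rw [hcc]
    field_simp
  have key1 : (a : ℂ) * c ^ 2 - (κ : ℂ) * c + w = 0 := by
    have h4 : (4 * (a : ℂ) ^ 2) ≠ 0 := mul_ne_zero (by norm_num) (pow_ne_zero _ hac)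
    apply mul_left_cancel₀ h4
    rw [mul_zero]
    linear_combination (a : ℂ) * hd2 + (a : ℂ) * (2 * (a : ℂ) * c - (κ : ℂ) - d) * hcmul
  have key2 : 2 * (a : ℂ) * c - (κ : ℂ) = -d := by
    linear_combination hcmul
  by_cases hzc : z = c
  · refine ⟨fun _ => z, rfl, fun t ht => ?_⟩
    have h0 : (a : ℂ) * z ^ 2 - (κ : ℂ) * z + w = 0 := by rw [hzc]; exact key1
    show HasDerivWithinAt (fun _ : ℝ => z) ((a : ℂ) * z ^ 2 - (κ : ℂ) * z + w) (Ici 0) t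
    rw [h0]
    exact hasDerivWithinAt_const _ _ z
  · set v₀ : ℂ := (z - c)⁻¹ with hv₀def
    have hv₀ : v₀ ≠ 0 := inv_ne_zero (sub_ne_zero.2 hzc)
    classical
    set v : ℝ → ℂ := fun t =>
      if d = 0 then v₀ - (a : ℂ) * t else (v₀ - a / d) * Complex.exp (d * t) + a / d with hvdef
    have hvd : ∀ t : ℝ, HasDerivAt v (d * v t - a) t := by
      intro t
      by_cases hd0 : d = 0
      · have h1 : HasDerivAt (fun t : ℝ => v₀ - (a : ℂ) * t) (-(a : ℂ)) t := by
          simpa using ((Complex.ofRealCLM.hasDerivAt (x := t)).const_mul (a : ℂ)).const_sub v₀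
        have : v = fun t : ℝ => v₀ - (a : ℂ) * t := by
          funext u; simp [hvdef, hd0]
        rw [this]
        convert h1 using 1
        rw [hd0]
        ring
      · have h1 : HasDerivAt (fun t : ℝ => d * (t : ℂ)) d t := by
          simpa using (Complex.ofRealCLM.hasDerivAt (x := t)).const_mul d
        have h2 := ((h1.cexp.const_mul (v₀ - a / d)).add_const ((a : ℂ) / d))
        have : v = fun t : ℝ => (v₀ - a / d) * Complex.exp (d * t) + a / d := by
          funext u; simp [hvdef, hd0]
        rw [this]
        refine h2.congr_deriv ?_
        simp [hvdef, hd0]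
        field_simp
        ring
    have hvc : Continuous v := continuous_iff_continuousAt.2 fun t => (hvd t).continuousAt
    set ψ : ℝ → ℂ := fun t => c + (v t)⁻¹ with hψdef
    have hv00 : v 0 = v₀ := by
      by_cases hd0 : d = 0 <;> simp [hvdef, hd0]
    have hψ0 : ψ 0 = z := by
      rw [hψdef]
      simp only [hv00, hv₀def, inv_inv]
      ring
    have hode : ∀ t : ℝ, v t ≠ 0 →
        HasDerivAt ψ ((a : ℂ) * ψ t ^ 2 - (κ : ℂ) * ψ t + w) t := by
      intro t hvt
      have h1 : HasDerivAt (fun u => (v u)⁻¹) (-(d * v t - (a : ℂ)) / v t ^ 2) t := by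
        have h0 := ((hasDerivAt_inv hvt).hasFDerivAt.restrictScalars ℝ).comp_hasDerivAt
          t (hvd t)
        refine h0.congr_deriv ?_
        simp [ContinuousLinearMap.smulRight_apply, smul_eq_mul]
        ring
      have h2 := h1.const_add c
      have heq : (a : ℂ) * (c + (v t)⁻¹) ^ 2 - (κ : ℂ) * (c + (v t)⁻¹) + w
          = -(d * v t - (a : ℂ)) / v t ^ 2 := by
        have expand : (a : ℂ) * (c + (v t)⁻¹) ^ 2 - (κ : ℂ) * (c + (v t)⁻¹) + w
            = ((a : ℂ) * c ^ 2 - (κ : ℂ) * c + w) + (2 * (a : ℂ) * c - (κ : ℂ)) * (v t)⁻¹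
              + (a : ℂ) * ((v t)⁻¹) ^ 2 := by ring
        rw [expand, key1, key2]
        field_simp
        ring
      show HasDerivAt (fun u => c + (v u)⁻¹)
        ((a : ℂ) * (c + (v t)⁻¹) ^ 2 - (κ : ℂ) * (c + (v t)⁻¹) + w) t
      rw [heq]
      exact h2
    have hnv : ∀ t : ℝ, 0 ≤ t → v t ≠ 0 := by
      by_contra hcon
      push_neg at hcon
      obtain ⟨t₁, ht₁, hvt₁⟩ := hcon
      set S : Set ℝ := {t : ℝ | 0 ≤ t ∧ v t = 0} with hS
      have hSne : S.Nonempty := ⟨t₁, ht₁, hvt₁⟩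
      have hSc : IsClosed S := by
        have : S = Ici 0 ∩ v ⁻¹' {0} := by
          ext u; simp [hS]
        rw [this]
        exact isClosed_Ici.inter (isClosed_singleton.preimage hvc)
      have hbdd : BddBelow S := ⟨0, fun u hu => hu.1⟩
      set t₀ : ℝ := sInf S with ht₀def
      have ht₀S : t₀ ∈ S := hSc.csInf_mem hSne hbdd
      have ht₀0 : 0 < t₀ := by
        rcases lt_or_eq_of_le ht₀S.1 with h | h
        · exact h
        · exact absurd (h ▸ ht₀S.2 : v 0 = 0) (hv00 ▸ hv₀)
      have hlt : ∀ u : ℝ, 0 ≤ u → u < t₀ → v u ≠ 0 := by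
        intro u h0 hu hvu
        exact absurd (csInf_le hbdd ⟨h0, hvu⟩) (not_le.2 hu)
      have hbound : ∀ u : ℝ, 0 ≤ u → u < t₀ →
          Complex.normSq (ψ u) ≤ (Complex.normSq z + Complex.normSq w) * Real.exp t₀ := by
        intro u h0 hu
        have hcOn : ContinuousOn ψ (Icc 0 u) := fun x hx =>
          ((hode x (hlt x hx.1 (lt_of_le_of_lt hx.2 hu))).continuousAt).continuousWithinAt
        have hdOn : ∀ x ∈ Ico 0 u,
            HasDerivWithinAt ψ ((a : ℂ) * ψ x ^ 2 - (κ : ℂ) * ψ x + w) (Ici x) x :=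
          fun x hx => (hode x (hlt x hx.1 (lt_trans hx.2 hu))).hasDerivWithinAt
        have := riccati_bound a κ ha0.le hκ w hw ψ u hcOn hdOn
          (by rw [hψ0]; exact hz) u ⟨h0, le_rfl⟩
        rw [hψ0] at this
        refine this.trans ?_
        have : Real.exp u ≤ Real.exp t₀ := Real.exp_le_exp.2 hu.le
        nlinarith [Complex.normSq_nonneg z, Complex.normSq_nonneg w, Real.exp_pos u]
      set C : ℝ := Real.sqrt ((Complex.normSq z + Complex.normSq w) * Real.exp t₀) + ‖c‖
        with hCdef
      have hinvle : ∀ u : ℝ, 0 ≤ u → u < t₀ → ‖(v u)⁻¹‖ ≤ C := by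
        intro u h0 hu
        have hvinv : (v u)⁻¹ = ψ u - c := by rw [hψdef]; ring
        rw [hvinv]
        calc ‖ψ u - c‖ ≤ ‖ψ u‖ + ‖c‖ := norm_sub_le _ _
          _ ≤ C := by
            rw [hCdef]
            have h1 : ‖ψ u‖ = Real.sqrt (Complex.normSq (ψ u)) := by
              rw [Complex.norm_def]
            rw [h1]
            have := Real.sqrt_le_sqrt (hbound u h0 hu)
            linarith
      have hC : 0 < C := by
        refine lt_of_lt_of_le ?_ (hinvle 0 le_rfl ht₀0)
        rw [norm_pos_iff]
        exact inv_ne_zero (hv00 ▸ hv₀)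
      have hinv : ∀ u : ℝ, 0 ≤ u → u < t₀ → C⁻¹ ≤ ‖v u‖ := by
        intro u h0 hu
        have h1 := hinvle u h0 hu
        rw [norm_inv] at h1
        have h2 : 0 < ‖v u‖ := norm_pos_iff.2 (hlt u h0 hu)
        rw [← inv_inv ‖v u‖]
        exact inv_anti₀ (inv_pos.2 h2) h1
      have htend : Tendsto (fun u => ‖v u‖) (𝓝[<] t₀) (𝓝 ‖v t₀‖) :=
        ((hvc.norm.tendsto t₀).mono_left nhdsWithin_le_nhds)
      have hev : ∀ᶠ u in 𝓝[<] t₀, C⁻¹ ≤ ‖v u‖ := by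
        filter_upwards [Ioo_mem_nhdsLT_of_mem (⟨ht₀0, le_rfl⟩ : t₀ ∈ Ioc (0 : ℝ) t₀)]
          with u hu
        exact hinv u hu.1.le hu.2
      have hfin : C⁻¹ ≤ ‖v t₀‖ := ge_of_tendsto htend hev
      rw [ht₀S.2, norm_zero] at hfin
      exact absurd hfin (not_le.2 (inv_pos.2 hC))
    exact ⟨ψ, hψ0, fun t ht => (hode t (hnv t ht)).hasDerivWithinAt⟩
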